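/- Assume moreover that U+G < T. Then the multiobjective problem has no weak-only Pareto optimal points: every weak Pareto optimal point of the attainable set S is also a strong Pareto optimal point of S, i.e., the weak Pareto boundary coincides with the strong Pareto boundary. -/

import Mathlib

open Finset

noncomputable section

set_option maxHeartbeats 1000000

/-- Effective estimation quality `ξ_{jk} = τ q_{jk}^{up} η_{jk}² / (1 + Σ_t τ q_{jt}^{up} η_{jt})`. -/
def xiX {G : ℕ} {K : Fin G → ℕ} (η : ∀ j : Fin G, Fin (K j) → ℝ)
    (τ : ℕ) (qup : ∀ j : Fin G, Fin (K j) → ℝ) (j : Fin G) (k : Fin (K j)) : ℝ :=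
  (τ : ℝ) * qup j k * (η j k) ^ 2 / (1 + ∑ t, (τ : ℝ) * qup j t * η j t)

/-- Effective estimation quality `θ_m = τ p_m^{up} β_m² / (1 + τ p_m^{up} β_m)`. -/
def thetaX {U : ℕ} (β : Fin U → ℝ) (τ : ℕ) (pup : Fin U → ℝ) (m : Fin U) : ℝ :=
  (τ : ℝ) * pup m * (β m) ^ 2 / (1 + (τ : ℝ) * pup m * β m)

/-- The multicast objective
`O_mu(x) = (1-τ/T) log₂(1 + min_{j,k} N q_j^{dl} ξ_{jk} / (1 + η_{jk}(P_un+P_mu)))`. -/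
def OmuX {U G : ℕ} {K : Fin G → ℕ} (N T : ℕ) (η : ∀ j : Fin G, Fin (K j) → ℝ)
    (τ : ℕ) (qup : ∀ j : Fin G, Fin (K j) → ℝ) (qdl : Fin G → ℝ) (pdl : Fin U → ℝ) : ℝ :=
  (1 - (τ : ℝ) / (T : ℝ)) * Real.logb 2 (1 + ⨅ j : Fin G, ⨅ k : Fin (K j),
    (N : ℝ) * qdl j * xiX η τ qup j k / (1 + η j k * (∑ m, pdl m + ∑ i, qdl i)))

/-- The unicast objective
`O_un(x) = (1-τ/T) Σ_m α_m log₂(1 + N p_m^{dl} θ_m / (1 + β_m (P_un+P_mu)))`. -/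
def OunX {U G : ℕ} (N T : ℕ) (β α : Fin U → ℝ)
    (τ : ℕ) (pup pdl : Fin U → ℝ) (qdl : Fin G → ℝ) : ℝ :=
  (1 - (τ : ℝ) / (T : ℝ)) * ∑ m, α m * Real.logb 2 (1 +
    (N : ℝ) * pdl m * thetaX β τ pup m / (1 + β m * (∑ u, pdl u + ∑ j, qdl j)))

/-- The feasible set (resource bundle) `X` of the multiobjective problem. -/
def feasX {U G : ℕ} {K : Fin G → ℕ} (T : ℕ) (P : ℝ)
    (Emu : ∀ j : Fin G, Fin (K j) → ℝ) (Eun : Fin U → ℝ) (τ : ℕ)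
    (qup : ∀ j : Fin G, Fin (K j) → ℝ) (qdl : Fin G → ℝ) (pup pdl : Fin U → ℝ) : Prop :=
  U + G ≤ τ ∧ τ ≤ T ∧
    (∀ j, 0 ≤ qdl j) ∧ (∀ m, 0 ≤ pdl m) ∧
    (∀ j k, 0 ≤ qup j k ∧ (τ : ℝ) * qup j k ≤ Emu j k) ∧
    (∀ m, 0 ≤ pup m ∧ (τ : ℝ) * pup m ≤ Eun m) ∧
    ∑ m, pdl m + ∑ j, qdl j ≤ P

/-- The attainable objective set `S = {(O_mu(x), O_un(x)) : x ∈ X} ⊆ ℝ²`. -/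
def attainS {U G : ℕ} {K : Fin G → ℕ} (N T : ℕ) (P : ℝ)
    (η Emu : ∀ j : Fin G, Fin (K j) → ℝ) (β Eun α : Fin U → ℝ) : Set (ℝ × ℝ) :=
  {y | ∃ (τ : ℕ) (qup : ∀ j : Fin G, Fin (K j) → ℝ) (qdl : Fin G → ℝ)
      (pup pdl : Fin U → ℝ),
    feasX T P Emu Eun τ qup qdl pup pdl ∧
    y = (OmuX N T η τ qup qdl pdl, OunX N T β α τ pup pdl qdl)}

lemma inf_attains {n : ℕ} (hn : 1 ≤ n) (f : Fin n → ℝ) : ∃ i, (⨅ j, f j) = f i := by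
  haveI : Nonempty (Fin n) := ⟨⟨0, hn⟩⟩
  obtain ⟨i, hi⟩ := Finite.exists_min f
  exact ⟨i, le_antisymm (ciInf_le (Set.finite_range f).bddBelow i) (le_ciInf hi)⟩

lemma inf2_attains {G : ℕ} {K : Fin G → ℕ} (hG : 1 ≤ G) (hK : ∀ j, 1 ≤ K j)
    (f : ∀ j, Fin (K j) → ℝ) : ∃ j k, (⨅ j, ⨅ k, f j k) = f j k := by
  obtain ⟨j, hj⟩ := inf_attains hG (fun j => ⨅ k, f j k)
  obtain ⟨k, hk⟩ := inf_attains (hK j) (f j)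
  exact ⟨j, k, by rw [hj, hk]⟩

lemma le_inf2 {G : ℕ} {K : Fin G → ℕ} (hG : 1 ≤ G) (hK : ∀ j, 1 ≤ K j)
    {f : ∀ j, Fin (K j) → ℝ} {c : ℝ} (h : ∀ j k, c ≤ f j k) : c ≤ ⨅ j, ⨅ k, f j k := by
  haveI : Nonempty (Fin G) := ⟨⟨0, hG⟩⟩
  refine le_ciInf fun j => ?_
  haveI : Nonempty (Fin (K j)) := ⟨⟨0, hK j⟩⟩
  exact le_ciInf (h j)

lemma inf2_le {G : ℕ} {K : Fin G → ℕ} (f : ∀ j, Fin (K j) → ℝ) (j : Fin G) (k : Fin (K j)) :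
    (⨅ j, ⨅ k, f j k) ≤ f j k :=
  le_trans (ciInf_le (Set.finite_range _).bddBelow j) (ciInf_le (Set.finite_range _).bddBelow k)


lemma xiX_nonneg {G : ℕ} {K : Fin G → ℕ} {η : ∀ j : Fin G, Fin (K j) → ℝ}
    {τ : ℕ} {qup : ∀ j : Fin G, Fin (K j) → ℝ}
    (hη : ∀ j k, 0 < η j k) (hqup : ∀ j k, 0 ≤ qup j k) (j : Fin G) (k : Fin (K j)) :
    0 ≤ xiX η τ qup j k := by
  unfold xiX
  apply div_nonneg
  · exact mul_nonneg (mul_nonneg (Nat.cast_nonneg τ) (hqup j k)) (sq_nonneg _)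
  · have h2 : (0:ℝ) ≤ ∑ t, (τ : ℝ) * qup j t * η j t :=
      Finset.sum_nonneg fun t _ =>
        mul_nonneg (mul_nonneg (Nat.cast_nonneg τ) (hqup j t)) (hη j t).le
    linarith

lemma xiX_pos {G : ℕ} {K : Fin G → ℕ} {η : ∀ j : Fin G, Fin (K j) → ℝ}
    {τ : ℕ} {qup : ∀ j : Fin G, Fin (K j) → ℝ}
    (hη : ∀ j k, 0 < η j k) (hqup : ∀ j k, 0 ≤ qup j k) (hτ : 0 < τ)
    (j : Fin G) (k : Fin (K j)) (hq : 0 < qup j k) :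
    0 < xiX η τ qup j k := by
  unfold xiX
  apply div_pos
  · have : (0:ℝ) < (τ:ℝ) := by exact_mod_cast hτ
    exact mul_pos (mul_pos this hq) (pow_pos (hη j k) 2)
  · have h2 : (0:ℝ) ≤ ∑ t, (τ : ℝ) * qup j t * η j t :=
      Finset.sum_nonneg fun t _ =>
        mul_nonneg (mul_nonneg (Nat.cast_nonneg τ) (hqup j t)) (hη j t).le
    linarith

lemma thetaX_nonneg {U : ℕ} {β : Fin U → ℝ} {τ : ℕ} {pup : Fin U → ℝ}
    (hβ : ∀ m, 0 < β m) (hpup : ∀ m, 0 ≤ pup m) (m : Fin U) :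
    0 ≤ thetaX β τ pup m := by
  unfold thetaX
  apply div_nonneg
  · exact mul_nonneg (mul_nonneg (Nat.cast_nonneg τ) (hpup m)) (sq_nonneg _)
  · have := mul_nonneg (mul_nonneg (Nat.cast_nonneg τ : (0:ℝ) ≤ (τ:ℝ)) (hpup m)) (hβ m).le
    linarith

lemma thetaX_pos {U : ℕ} {β : Fin U → ℝ} {τ : ℕ} {pup : Fin U → ℝ}
    (hβ : ∀ m, 0 < β m) (hpup : ∀ m, 0 ≤ pup m) (hτ : 0 < τ)
    (m : Fin U) (hp : 0 < pup m) : 0 < thetaX β τ pup m := by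
  unfold thetaX
  have hτR : (0:ℝ) < (τ:ℝ) := by exact_mod_cast hτ
  apply div_pos
  · exact mul_pos (mul_pos hτR hp) (pow_pos (hβ m) 2)
  · have := mul_nonneg (mul_nonneg hτR.le (hpup m)) (hβ m).le
    linarith

lemma thetaX_zero {U : ℕ} {β : Fin U → ℝ} {τ : ℕ} {pup : Fin U → ℝ}
    (m : Fin U) (hp : pup m = 0) : thetaX β τ pup m = 0 := by
  unfold thetaX; rw [hp]; simp

lemma logb_pert {s z : ℝ} (hs0 : 0 < s) (hs1 : s < 1) (hz : 0 ≤ z) :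
    Real.logb 2 (1 - s) + Real.logb 2 (1 + z) ≤ Real.logb 2 (1 + (1 - s) * z) := by
  have h1 : (0:ℝ) < 1 - s := by linarith
  have h2 : (0:ℝ) < 1 + z := by linarith
  rw [← Real.logb_mul h1.ne' h2.ne']
  exact Real.logb_le_logb_of_le one_lt_two (by positivity) (by nlinarith)

lemma caseA {U G : ℕ} (hU : 1 ≤ U) (hG : 1 ≤ G) {K : Fin G → ℕ} (hK : ∀ j, 1 ≤ K j)
    {N : ℕ} (hN : 1 ≤ N) {T : ℕ} {P : ℝ}
    {η Emu : ∀ j : Fin G, Fin (K j) → ℝ} {β Eun α : Fin U → ℝ}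
    (hη : ∀ j k, 0 < η j k) (hEmu : ∀ j k, 0 < Emu j k)
    (hβ : ∀ m, 0 < β m) (hEun : ∀ m, 0 < Eun m) (hα : ∀ m, 0 < α m)
    {τ : ℕ} {qup : ∀ j : Fin G, Fin (K j) → ℝ} {qdl : Fin G → ℝ} {pup pdl : Fin U → ℝ}
    (hfeas : feasX T P Emu Eun τ qup qdl pup pdl)
    {a b : ℝ} (hb0 : 0 ≤ b)
    (ha : a ≤ OmuX N T η τ qup qdl pdl)
    (hb : b < OunX N T β α τ pup pdl qdl) :
    ∃ y ∈ attainS N T P η Emu β Eun α, a < y.1 ∧ b < y.2 := by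
  obtain ⟨hτ1, hτ2, hqdl0, hpdl0, hqup0, hpup0, hpow⟩ := hfeas
  haveI : Nonempty (Fin U) := ⟨⟨0, hU⟩⟩
  haveI : Nonempty (Fin G) := ⟨⟨0, hG⟩⟩
  have hτpos : 0 < τ := by omega
  have hτR : (0:ℝ) < (τ:ℝ) := by exact_mod_cast hτpos
  have hT0 : (0:ℝ) < (T:ℝ) := by
    have : 0 < T := by omega
    exact_mod_cast this
  have hfle : (τ:ℝ)/(T:ℝ) ≤ 1 := (div_le_one hT0).mpr (by exact_mod_cast hτ2)
  have hf0 : 0 ≤ 1 - (τ:ℝ)/(T:ℝ) := by linarith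
  have hGR : (0:ℝ) < (G:ℝ) := by exact_mod_cast hG
  have hNR : (0:ℝ) < (N:ℝ) := by exact_mod_cast hN
  have hPt0 : 0 ≤ ∑ m, pdl m + ∑ j, qdl j :=
    add_nonneg (Finset.sum_nonneg fun m _ => hpdl0 m) (Finset.sum_nonneg fun j _ => hqdl0 j)
  have hθ0 : ∀ m, 0 ≤ thetaX β τ pup m := thetaX_nonneg hβ fun m => (hpup0 m).1
  have hd0 : ∀ m : Fin U, (0:ℝ) < 1 + β m * (∑ u, pdl u + ∑ j, qdl j) := fun m => by
    have := mul_nonneg (hβ m).le hPt0; linarith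
  have hz0 : ∀ m : Fin U,
      0 ≤ (N:ℝ) * pdl m * thetaX β τ pup m / (1 + β m * (∑ u, pdl u + ∑ j, qdl j)) :=
    fun m => div_nonneg (mul_nonneg (mul_nonneg hNR.le (hpdl0 m)) (hθ0 m)) (hd0 m).le
  have hOun_eq : OunX N T β α τ pup pdl qdl =
      (1 - (τ:ℝ)/(T:ℝ)) * ∑ m, α m * Real.logb 2
        (1 + (N:ℝ) * pdl m * thetaX β τ pup m / (1 + β m * (∑ u, pdl u + ∑ j, qdl j))) := rfl
  have hS0 : 0 ≤ ∑ m, α m * Real.logb 2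
      (1 + (N:ℝ) * pdl m * thetaX β τ pup m / (1 + β m * (∑ u, pdl u + ∑ j, qdl j))) :=
    Finset.sum_nonneg fun m _ =>
      mul_nonneg (hα m).le (Real.logb_nonneg one_lt_two (by linarith [hz0 m]))
  have hOun_pos : 0 < OunX N T β α τ pup pdl qdl := lt_of_le_of_lt hb0 hb
  have hf_pos : 0 < 1 - (τ:ℝ)/(T:ℝ) := by
    rcases hf0.lt_or_eq with h | h
    · exact h
    · exfalso; rw [hOun_eq, ← h, zero_mul] at hOun_pos; exact lt_irrefl 0 hOun_pos
  have hS_pos : 0 < ∑ m, α m * Real.logb 2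
      (1 + (N:ℝ) * pdl m * thetaX β τ pup m / (1 + β m * (∑ u, pdl u + ∑ j, qdl j))) := by
    rw [hOun_eq] at hOun_pos
    by_contra hc
    push_neg at hc
    nlinarith
  have hsumpdl : 0 < ∑ m, pdl m := by
    by_contra hc
    push_neg at hc
    have h0 : ∑ m, pdl m = 0 :=
      le_antisymm hc (Finset.sum_nonneg fun m _ => hpdl0 m)
    have hz : ∀ i ∈ Finset.univ, pdl i = 0 :=
      (Finset.sum_eq_zero_iff_of_nonneg fun i _ => hpdl0 i).mp h0
    have hSz : (∑ m, α m * Real.logb 2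
        (1 + (N:ℝ) * pdl m * thetaX β τ pup m / (1 + β m * (∑ u, pdl u + ∑ j, qdl j)))) = 0 :=
      Finset.sum_eq_zero fun m _ => by rw [hz m (Finset.mem_univ m)]; simp
    rw [hSz] at hS_pos; exact lt_irrefl 0 hS_pos
  -- choose the perturbation size
  set g := OunX N T β α τ pup pdl qdl - b with hg_def
  have hg : 0 < g := by rw [hg_def]; linarith
  set C := (1 - (τ:ℝ)/(T:ℝ)) * ∑ m, α m with hC_def
  have hC : 0 < C := mul_pos hf_pos (Finset.sum_pos (fun m _ => hα m) Finset.univ_nonempty)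
  set r := (2:ℝ) ^ (-(g/C)) with hr_def
  have hr0 : 0 < r := Real.rpow_pos_of_pos two_pos _
  have hr1 : r < 1 :=
    Real.rpow_lt_one_of_one_lt_of_neg one_lt_two (neg_neg_of_pos (div_pos hg hC))
  set s := (1 - r)/2 with hs_def
  have hs0 : 0 < s := by rw [hs_def]; linarith
  have hs1 : s < 1 := by rw [hs_def]; linarith
  have h1s_pos : 0 < 1 - s := by linarith
  have hlogb : -(g/C) < Real.logb 2 (1 - s) := by
    have h1s : r < 1 - s := by rw [hs_def]; linarith
    have h2 := Real.logb_lt_logb (b := 2) one_lt_two hr0 h1s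
    rwa [hr_def, Real.logb_rpow (by norm_num) (by norm_num)] at h2
  set δ := s * (∑ m, pdl m) / (G:ℝ) with hδ_def
  have hδ : 0 < δ := div_pos (mul_pos hs0 hsumpdl) hGR
  set pdl' : Fin U → ℝ := fun m => (1 - s) * pdl m with hpdl'_def
  set qdl' : Fin G → ℝ := fun j => qdl j + δ with hqdl'_def
  have hpdl'0 : ∀ m, 0 ≤ pdl' m := fun m => by
    simp only [hpdl'_def]; exact mul_nonneg h1s_pos.le (hpdl0 m)
  have hqdl'pos : ∀ j, 0 < qdl' j := fun j => by
    simp only [hqdl'_def]; have := hqdl0 j; linarith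
  have hPt' : ∑ m, pdl' m + ∑ j, qdl' j = ∑ m, pdl m + ∑ j, qdl j := by
    simp only [hpdl'_def, hqdl'_def]
    rw [Finset.sum_add_distrib, Finset.sum_const, ← Finset.mul_sum]
    simp only [Finset.card_univ, Fintype.card_fin, nsmul_eq_mul, hδ_def]
    field_simp
    ring
  -- the unicast objective stays above b
  clear_value g C r s δ pdl' qdl'
  have hOun'_eq : OunX N T β α τ pup pdl' qdl' =
      (1 - (τ:ℝ)/(T:ℝ)) * ∑ m, α m * Real.logb 2
        (1 + (N:ℝ) * pdl' m * thetaX β τ pup m / (1 + β m * (∑ u, pdl u + ∑ j, qdl j))) := by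
    unfold OunX
    rw [hPt']
  have hsum_eq : (∑ m, α m * Real.logb 2
        (1 + (N:ℝ) * pdl' m * thetaX β τ pup m / (1 + β m * (∑ u, pdl u + ∑ j, qdl j))))
      = ∑ m, α m * Real.logb 2
        (1 + (1 - s) * ((N:ℝ) * pdl m * thetaX β τ pup m / (1 + β m * (∑ u, pdl u + ∑ j, qdl j)))) :=
    Finset.sum_congr rfl fun m _ => by
      rw [show (1:ℝ) + (N:ℝ) * pdl' m * thetaX β τ pup m / (1 + β m * (∑ u, pdl u + ∑ j, qdl j))
          = 1 + (1 - s) * ((N:ℝ) * pdl m * thetaX β τ pup m / (1 + β m * (∑ u, pdl u + ∑ j, qdl j))) from by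
        simp only [hpdl'_def]; ring]
  have hkey : Real.logb 2 (1 - s) * (∑ m, α m) + (∑ m, α m * Real.logb 2
        (1 + (N:ℝ) * pdl m * thetaX β τ pup m / (1 + β m * (∑ u, pdl u + ∑ j, qdl j))))
      ≤ ∑ m, α m * Real.logb 2
        (1 + (1 - s) * ((N:ℝ) * pdl m * thetaX β τ pup m / (1 + β m * (∑ u, pdl u + ∑ j, qdl j)))) := by
    rw [Finset.mul_sum, ← Finset.sum_add_distrib]
    refine Finset.sum_le_sum fun m _ => ?_
    have h1 := logb_pert hs0 hs1 (hz0 m)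
    have h2 := mul_le_mul_of_nonneg_left h1 (hα m).le
    rw [mul_add] at h2
    linarith
  have hOunPert : b < OunX N T β α τ pup pdl' qdl' := by
    rw [hOun'_eq, hsum_eq]
    have h2 : C * (-(g/C)) = -g := by field_simp
    have h3 : -g < C * Real.logb 2 (1 - s) := by
      have := mul_lt_mul_of_pos_left hlogb hC
      linarith
    have h6 := mul_le_mul_of_nonneg_left hkey hf0
    have h5 : (1 - (τ:ℝ)/(T:ℝ)) * (Real.logb 2 (1 - s) * (∑ m, α m) + (∑ m, α m * Real.logb 2
          (1 + (N:ℝ) * pdl m * thetaX β τ pup m / (1 + β m * (∑ u, pdl u + ∑ j, qdl j)))))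
        = C * Real.logb 2 (1 - s) + (1 - (τ:ℝ)/(T:ℝ)) * (∑ m, α m * Real.logb 2
          (1 + (N:ℝ) * pdl m * thetaX β τ pup m / (1 + β m * (∑ u, pdl u + ∑ j, qdl j)))) := by
      rw [hC_def]; ring
    have hb' : b = (1 - (τ:ℝ)/(T:ℝ)) * (∑ m, α m * Real.logb 2
        (1 + (N:ℝ) * pdl m * thetaX β τ pup m / (1 + β m * (∑ u, pdl u + ∑ j, qdl j)))) - g := by
      rw [hg_def, hOun_eq]; ring
    rw [h5] at h6
    linarith
  -- the multicast objective: two subcases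
  have hξ0 : ∀ j k, 0 ≤ xiX η τ qup j k := xiX_nonneg hη fun j k => (hqup0 j k).1
  have hdμ : ∀ (j : Fin G) (k : Fin (K j)),
      (0:ℝ) < 1 + η j k * (∑ m, pdl m + ∑ i, qdl i) := fun j k => by
    have := mul_nonneg (hη j k).le hPt0; linarith
  have hF0 : ∀ (j : Fin G) (k : Fin (K j)),
      0 ≤ (N:ℝ) * qdl j * xiX η τ qup j k / (1 + η j k * (∑ m, pdl m + ∑ i, qdl i)) :=
    fun j k => div_nonneg (mul_nonneg (mul_nonneg hNR.le (hqdl0 j)) (hξ0 j k)) (hdμ j k).le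
  have hm0 : 0 ≤ ⨅ j, ⨅ k,
      (N:ℝ) * qdl j * xiX η τ qup j k / (1 + η j k * (∑ m, pdl m + ∑ i, qdl i)) :=
    le_inf2 hG hK hF0
  have hOmu_eq : OmuX N T η τ qup qdl pdl = (1 - (τ:ℝ)/(T:ℝ)) * Real.logb 2 (1 + ⨅ j, ⨅ k,
      (N:ℝ) * qdl j * xiX η τ qup j k / (1 + η j k * (∑ m, pdl m + ∑ i, qdl i))) := rfl
  obtain ⟨qup', hqup', hOmuPert⟩ :
      ∃ qup' : ∀ j : Fin G, Fin (K j) → ℝ,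
        (∀ j k, 0 ≤ qup' j k ∧ (τ:ℝ) * qup' j k ≤ Emu j k) ∧
        a < OmuX N T η τ qup' qdl' pdl' := by
    rcases hm0.lt_or_eq with hmpos | hmzero
    · refine ⟨qup, hqup0, ?_⟩
      have hOmu'_eq : OmuX N T η τ qup qdl' pdl' = (1 - (τ:ℝ)/(T:ℝ)) * Real.logb 2 (1 + ⨅ j, ⨅ k,
          (N:ℝ) * qdl' j * xiX η τ qup j k / (1 + η j k * (∑ m, pdl m + ∑ i, qdl i))) := by
        unfold OmuX
        rw [hPt']
      obtain ⟨j0, k0, hatt⟩ := inf2_attains hG hK (fun j k =>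
        (N:ℝ) * qdl' j * xiX η τ qup j k / (1 + η j k * (∑ m, pdl m + ∑ i, qdl i)))
      have hFle : (⨅ j, ⨅ k,
            (N:ℝ) * qdl j * xiX η τ qup j k / (1 + η j k * (∑ m, pdl m + ∑ i, qdl i)))
          ≤ (N:ℝ) * qdl j0 * xiX η τ qup j0 k0 / (1 + η j0 k0 * (∑ m, pdl m + ∑ i, qdl i)) :=
        inf2_le _ j0 k0
      have hFpos : 0 < (N:ℝ) * qdl j0 * xiX η τ qup j0 k0
          / (1 + η j0 k0 * (∑ m, pdl m + ∑ i, qdl i)) := lt_of_lt_of_le hmpos hFle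
      have hnum_pos : 0 < (N:ℝ) * qdl j0 * xiX η τ qup j0 k0 := by
        by_contra hc
        push_neg at hc
        have := div_nonpos_of_nonpos_of_nonneg hc (hdμ j0 k0).le
        linarith
      have hξpos : 0 < xiX η τ qup j0 k0 := by
        rcases (hξ0 j0 k0).lt_or_eq with h | h
        · exact h
        · exfalso; rw [← h, mul_zero] at hnum_pos; exact lt_irrefl 0 hnum_pos
      have hq' : qdl j0 < qdl' j0 := by simp only [hqdl'_def]; linarith
      have hnumlt : (N:ℝ) * qdl j0 * xiX η τ qup j0 k0 < (N:ℝ) * qdl' j0 * xiX η τ qup j0 k0 :=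
        mul_lt_mul_of_pos_right (mul_lt_mul_of_pos_left hq' hNR) hξpos
      have hstrict : (N:ℝ) * qdl j0 * xiX η τ qup j0 k0
            / (1 + η j0 k0 * (∑ m, pdl m + ∑ i, qdl i))
          < (N:ℝ) * qdl' j0 * xiX η τ qup j0 k0
            / (1 + η j0 k0 * (∑ m, pdl m + ∑ i, qdl i)) :=
        (div_lt_div_iff_of_pos_right (hdμ j0 k0)).mpr hnumlt
      have hminlt : (⨅ j, ⨅ k,
            (N:ℝ) * qdl j * xiX η τ qup j k / (1 + η j k * (∑ m, pdl m + ∑ i, qdl i)))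
          < ⨅ j, ⨅ k,
            (N:ℝ) * qdl' j * xiX η τ qup j k / (1 + η j k * (∑ m, pdl m + ∑ i, qdl i)) := by
        rw [hatt]
        exact lt_of_le_of_lt hFle hstrict
      rw [hOmu_eq] at ha
      rw [hOmu'_eq]
      exact lt_of_le_of_lt ha (mul_lt_mul_of_pos_left
        (Real.logb_lt_logb one_lt_two (by linarith) (by linarith)) hf_pos)
    · refine ⟨fun j k => Emu j k / (τ:ℝ), fun j k =>
        ⟨(div_pos (hEmu j k) hτR).le, le_of_eq (by field_simp)⟩, ?_⟩
      have hξ' : ∀ (j : Fin G) (k : Fin (K j)),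
          0 < xiX η τ (fun j k => Emu j k / (τ:ℝ)) j k := fun j k =>
        xiX_pos hη (fun j k => (div_pos (hEmu j k) hτR).le) hτpos j k (div_pos (hEmu j k) hτR)
      have hOmu'_eq : OmuX N T η τ (fun j k => Emu j k / (τ:ℝ)) qdl' pdl'
          = (1 - (τ:ℝ)/(T:ℝ)) * Real.logb 2 (1 + ⨅ j, ⨅ k,
            (N:ℝ) * qdl' j * xiX η τ (fun j k => Emu j k / (τ:ℝ)) j k
              / (1 + η j k * (∑ m, pdl m + ∑ i, qdl i))) := by
        unfold OmuX
        rw [hPt']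
      have hF''pos : ∀ (j : Fin G) (k : Fin (K j)),
          0 < (N:ℝ) * qdl' j * xiX η τ (fun j k => Emu j k / (τ:ℝ)) j k
            / (1 + η j k * (∑ m, pdl m + ∑ i, qdl i)) := fun j k =>
        div_pos (mul_pos (mul_pos hNR (hqdl'pos j)) (hξ' j k)) (hdμ j k)
      obtain ⟨j0, k0, hatt⟩ := inf2_attains hG hK (fun j k =>
        (N:ℝ) * qdl' j * xiX η τ (fun j k => Emu j k / (τ:ℝ)) j k
          / (1 + η j k * (∑ m, pdl m + ∑ i, qdl i)))
      have hm'pos : 0 < ⨅ j, ⨅ k,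
          (N:ℝ) * qdl' j * xiX η τ (fun j k => Emu j k / (τ:ℝ)) j k
            / (1 + η j k * (∑ m, pdl m + ∑ i, qdl i)) := by
        rw [hatt]; exact hF''pos j0 k0
      have ha0 : a ≤ 0 := by
        rw [hOmu_eq, ← hmzero] at ha
        simpa using ha
      rw [hOmu'_eq]
      have hpos : 0 < (1 - (τ:ℝ)/(T:ℝ)) * Real.logb 2 (1 + ⨅ j, ⨅ k,
          (N:ℝ) * qdl' j * xiX η τ (fun j k => Emu j k / (τ:ℝ)) j k
            / (1 + η j k * (∑ m, pdl m + ∑ i, qdl i))) :=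
        mul_pos hf_pos (Real.logb_pos one_lt_two (by linarith))
      linarith
  refine ⟨(OmuX N T η τ qup' qdl' pdl', OunX N T β α τ pup pdl' qdl'),
    ⟨τ, qup', qdl', pup, pdl',
      ⟨hτ1, hτ2, fun j => (hqdl'pos j).le, hpdl'0, hqup', hpup0, ?_⟩, rfl⟩,
    hOmuPert, hOunPert⟩
  rw [hPt']
  exact hpow

lemma caseB {U G : ℕ} (hU : 1 ≤ U) (hG : 1 ≤ G) {K : Fin G → ℕ} (hK : ∀ j, 1 ≤ K j)
    {N : ℕ} (hN : 1 ≤ N) {T : ℕ} {P : ℝ}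
    {η Emu : ∀ j : Fin G, Fin (K j) → ℝ} {β Eun α : Fin U → ℝ}
    (hη : ∀ j k, 0 < η j k) (hEmu : ∀ j k, 0 < Emu j k)
    (hβ : ∀ m, 0 < β m) (hEun : ∀ m, 0 < Eun m) (hα : ∀ m, 0 < α m)
    {τ : ℕ} {qup : ∀ j : Fin G, Fin (K j) → ℝ} {qdl : Fin G → ℝ} {pup pdl : Fin U → ℝ}
    (hfeas : feasX T P Emu Eun τ qup qdl pup pdl)
    {a b : ℝ} (ha0 : 0 ≤ a)
    (ha : a < OmuX N T η τ qup qdl pdl)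
    (hb : b ≤ OunX N T β α τ pup pdl qdl) :
    ∃ y ∈ attainS N T P η Emu β Eun α, a < y.1 ∧ b < y.2 := by
  obtain ⟨hτ1, hτ2, hqdl0, hpdl0, hqup0, hpup0, hpow⟩ := hfeas
  haveI : Nonempty (Fin U) := ⟨⟨0, hU⟩⟩
  haveI : Nonempty (Fin G) := ⟨⟨0, hG⟩⟩
  have hτpos : 0 < τ := by omega
  have hτR : (0:ℝ) < (τ:ℝ) := by exact_mod_cast hτpos
  have hT0 : (0:ℝ) < (T:ℝ) := by
    have : 0 < T := by omega
    exact_mod_cast this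
  have hfle : (τ:ℝ)/(T:ℝ) ≤ 1 := (div_le_one hT0).mpr (by exact_mod_cast hτ2)
  have hf0 : 0 ≤ 1 - (τ:ℝ)/(T:ℝ) := by linarith
  have hUR : (0:ℝ) < (U:ℝ) := by exact_mod_cast hU
  have hNR : (0:ℝ) < (N:ℝ) := by exact_mod_cast hN
  have hPt0 : 0 ≤ ∑ m, pdl m + ∑ j, qdl j :=
    add_nonneg (Finset.sum_nonneg fun m _ => hpdl0 m) (Finset.sum_nonneg fun j _ => hqdl0 j)
  -- multicast-side basic facts
  have hξ0 : ∀ j k, 0 ≤ xiX η τ qup j k := xiX_nonneg hη fun j k => (hqup0 j k).1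
  have hdμ : ∀ (j : Fin G) (k : Fin (K j)),
      (0:ℝ) < 1 + η j k * (∑ m, pdl m + ∑ i, qdl i) := fun j k => by
    have := mul_nonneg (hη j k).le hPt0; linarith
  have hF0 : ∀ (j : Fin G) (k : Fin (K j)),
      0 ≤ (N:ℝ) * qdl j * xiX η τ qup j k / (1 + η j k * (∑ m, pdl m + ∑ i, qdl i)) :=
    fun j k => div_nonneg (mul_nonneg (mul_nonneg hNR.le (hqdl0 j)) (hξ0 j k)) (hdμ j k).le
  have hm0 : 0 ≤ ⨅ j, ⨅ k,
      (N:ℝ) * qdl j * xiX η τ qup j k / (1 + η j k * (∑ m, pdl m + ∑ i, qdl i)) :=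
    le_inf2 hG hK hF0
  have hOmu_eq : OmuX N T η τ qup qdl pdl = (1 - (τ:ℝ)/(T:ℝ)) * Real.logb 2 (1 + ⨅ j, ⨅ k,
      (N:ℝ) * qdl j * xiX η τ qup j k / (1 + η j k * (∑ m, pdl m + ∑ i, qdl i))) := rfl
  have hOmu_pos : 0 < OmuX N T η τ qup qdl pdl := lt_of_le_of_lt ha0 ha
  have hlog0 : 0 ≤ Real.logb 2 (1 + ⨅ j, ⨅ k,
      (N:ℝ) * qdl j * xiX η τ qup j k / (1 + η j k * (∑ m, pdl m + ∑ i, qdl i))) :=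
    Real.logb_nonneg one_lt_two (by linarith)
  have hf_pos : 0 < 1 - (τ:ℝ)/(T:ℝ) := by
    rcases hf0.lt_or_eq with h | h
    · exact h
    · exfalso; rw [hOmu_eq, ← h, zero_mul] at hOmu_pos; exact lt_irrefl 0 hOmu_pos
  have hlog_pos : 0 < Real.logb 2 (1 + ⨅ j, ⨅ k,
      (N:ℝ) * qdl j * xiX η τ qup j k / (1 + η j k * (∑ m, pdl m + ∑ i, qdl i))) := by
    rw [hOmu_eq] at hOmu_pos
    by_contra hc
    push_neg at hc
    nlinarith
  have hM_pos : 0 < ⨅ j, ⨅ k,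
      (N:ℝ) * qdl j * xiX η τ qup j k / (1 + η j k * (∑ m, pdl m + ∑ i, qdl i)) := by
    rcases hm0.lt_or_eq with h | h
    · exact h
    · exfalso; rw [← h] at hlog_pos; simp at hlog_pos
  have hqdlpos : ∀ j, 0 < qdl j := by
    intro j
    have hFb := inf2_le (fun j k =>
      (N:ℝ) * qdl j * xiX η τ qup j k / (1 + η j k * (∑ m, pdl m + ∑ i, qdl i))) j ⟨0, hK j⟩
    have hFpos : 0 < (N:ℝ) * qdl j * xiX η τ qup j ⟨0, hK j⟩
        / (1 + η j ⟨0, hK j⟩ * (∑ m, pdl m + ∑ i, qdl i)) := lt_of_lt_of_le hM_pos hFb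
    by_contra hc
    push_neg at hc
    have hq0 : qdl j = 0 := le_antisymm hc (hqdl0 j)
    rw [hq0] at hFpos
    simp at hFpos
  have hsumqdl : 0 < ∑ j, qdl j := Finset.sum_pos (fun j _ => hqdlpos j) Finset.univ_nonempty
  -- choose the perturbation size
  set g := OmuX N T η τ qup qdl pdl - a with hg_def
  have hg : 0 < g := by rw [hg_def]; linarith
  set r := (2:ℝ) ^ (-(g/(1 - (τ:ℝ)/(T:ℝ)))) with hr_def
  have hr0 : 0 < r := Real.rpow_pos_of_pos two_pos _
  have hr1 : r < 1 :=
    Real.rpow_lt_one_of_one_lt_of_neg one_lt_two (neg_neg_of_pos (div_pos hg hf_pos))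
  set s := (1 - r)/2 with hs_def
  have hs0 : 0 < s := by rw [hs_def]; linarith
  have hs1 : s < 1 := by rw [hs_def]; linarith
  have h1s_pos : 0 < 1 - s := by linarith
  have hlogb : -(g/(1 - (τ:ℝ)/(T:ℝ))) < Real.logb 2 (1 - s) := by
    have h1s : r < 1 - s := by rw [hs_def]; linarith
    have h2 := Real.logb_lt_logb (b := 2) one_lt_two hr0 h1s
    rwa [hr_def, Real.logb_rpow (by norm_num) (by norm_num)] at h2
  set δ := s * (∑ j, qdl j) / (U:ℝ) with hδ_def
  have hδ : 0 < δ := div_pos (mul_pos hs0 hsumqdl) hUR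
  set pdl' : Fin U → ℝ := fun m => pdl m + δ with hpdl'_def
  set qdl' : Fin G → ℝ := fun j => (1 - s) * qdl j with hqdl'_def
  have hpdl'pos : ∀ m, 0 < pdl' m := fun m => by
    simp only [hpdl'_def]; have := hpdl0 m; linarith
  have hqdl'0 : ∀ j, 0 ≤ qdl' j := fun j => by
    simp only [hqdl'_def]; exact mul_nonneg h1s_pos.le (hqdl0 j)
  have hPt' : ∑ m, pdl' m + ∑ j, qdl' j = ∑ m, pdl m + ∑ j, qdl j := by
    simp only [hpdl'_def, hqdl'_def]
    rw [Finset.sum_add_distrib, Finset.sum_const, ← Finset.mul_sum]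
    simp only [Finset.card_univ, Fintype.card_fin, nsmul_eq_mul, hδ_def]
    field_simp
    ring
  clear_value g r s δ pdl' qdl'
  -- multicast objective stays above a
  have hOmu'_eq : OmuX N T η τ qup qdl' pdl' = (1 - (τ:ℝ)/(T:ℝ)) * Real.logb 2 (1 + ⨅ j, ⨅ k,
      (N:ℝ) * qdl' j * xiX η τ qup j k / (1 + η j k * (∑ m, pdl m + ∑ i, qdl i))) := by
    unfold OmuX
    rw [hPt']
  have hM'ge : (1 - s) * (⨅ j, ⨅ k,
        (N:ℝ) * qdl j * xiX η τ qup j k / (1 + η j k * (∑ m, pdl m + ∑ i, qdl i)))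
      ≤ ⨅ j, ⨅ k,
        (N:ℝ) * qdl' j * xiX η τ qup j k / (1 + η j k * (∑ m, pdl m + ∑ i, qdl i)) := by
    refine le_inf2 hG hK fun j k => ?_
    have h1 := inf2_le (fun j k =>
      (N:ℝ) * qdl j * xiX η τ qup j k / (1 + η j k * (∑ m, pdl m + ∑ i, qdl i))) j k
    have heq : (N:ℝ) * qdl' j * xiX η τ qup j k / (1 + η j k * (∑ m, pdl m + ∑ i, qdl i))
        = (1 - s) * ((N:ℝ) * qdl j * xiX η τ qup j k
          / (1 + η j k * (∑ m, pdl m + ∑ i, qdl i))) := by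
      simp only [hqdl'_def]; ring
    rw [heq]
    exact mul_le_mul_of_nonneg_left h1 h1s_pos.le
  have hM'0 : 0 ≤ ⨅ j, ⨅ k,
      (N:ℝ) * qdl' j * xiX η τ qup j k / (1 + η j k * (∑ m, pdl m + ∑ i, qdl i)) := by
    have := mul_nonneg h1s_pos.le hm0
    linarith [hM'ge]
  have hOmuPert : a < OmuX N T η τ qup qdl' pdl' := by
    rw [hOmu'_eq]
    have hA := logb_pert hs0 hs1 hm0
    have hB : Real.logb 2 (1 + (1 - s) * (⨅ j, ⨅ k,
          (N:ℝ) * qdl j * xiX η τ qup j k / (1 + η j k * (∑ m, pdl m + ∑ i, qdl i))))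
        ≤ Real.logb 2 (1 + ⨅ j, ⨅ k,
          (N:ℝ) * qdl' j * xiX η τ qup j k / (1 + η j k * (∑ m, pdl m + ∑ i, qdl i))) := by
      refine Real.logb_le_logb_of_le one_lt_two ?_ (by linarith [hM'ge])
      have := mul_nonneg h1s_pos.le hm0
      linarith
    have hτT : (τ:ℝ) < (T:ℝ) := (div_lt_one hT0).mp (by linarith)
    have h2 : (1 - (τ:ℝ)/(T:ℝ)) * (-(g/(1 - (τ:ℝ)/(T:ℝ)))) = -g := by
      field_simp
      rw [div_self (sub_ne_zero.mpr hτT.ne')]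
    have h3 : -g < (1 - (τ:ℝ)/(T:ℝ)) * Real.logb 2 (1 - s) := by
      have := mul_lt_mul_of_pos_left hlogb hf_pos
      linarith
    have h4 := mul_le_mul_of_nonneg_left (hA.trans hB) hf0
    have ha' : a = (1 - (τ:ℝ)/(T:ℝ)) * Real.logb 2 (1 + ⨅ j, ⨅ k,
        (N:ℝ) * qdl j * xiX η τ qup j k / (1 + η j k * (∑ m, pdl m + ∑ i, qdl i))) - g := by
      rw [hg_def, hOmu_eq]; ring
    rw [mul_add] at h4
    linarith
  -- unicast objective
  have hθ0 : ∀ m, 0 ≤ thetaX β τ pup m := thetaX_nonneg hβ fun m => (hpup0 m).1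
  have hd0 : ∀ m : Fin U, (0:ℝ) < 1 + β m * (∑ u, pdl u + ∑ j, qdl j) := fun m => by
    have := mul_nonneg (hβ m).le hPt0; linarith
  have hz0 : ∀ m : Fin U,
      0 ≤ (N:ℝ) * pdl m * thetaX β τ pup m / (1 + β m * (∑ u, pdl u + ∑ j, qdl j)) :=
    fun m => div_nonneg (mul_nonneg (mul_nonneg hNR.le (hpdl0 m)) (hθ0 m)) (hd0 m).le
  have hOun_eq : OunX N T β α τ pup pdl qdl =
      (1 - (τ:ℝ)/(T:ℝ)) * ∑ m, α m * Real.logb 2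
        (1 + (N:ℝ) * pdl m * thetaX β τ pup m / (1 + β m * (∑ u, pdl u + ∑ j, qdl j))) := rfl
  obtain ⟨pup', hpup', hOunPert⟩ :
      ∃ pup' : Fin U → ℝ, (∀ m, 0 ≤ pup' m ∧ (τ:ℝ) * pup' m ≤ Eun m) ∧
        b < OunX N T β α τ pup' pdl' qdl' := by
    by_cases hex : ∃ m0, 0 < pup m0
    · obtain ⟨m0, hm0'⟩ := hex
      refine ⟨pup, hpup0, ?_⟩
      have hOun'_eq : OunX N T β α τ pup pdl' qdl' =
          (1 - (τ:ℝ)/(T:ℝ)) * ∑ m, α m * Real.logb 2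
            (1 + (N:ℝ) * pdl' m * thetaX β τ pup m
              / (1 + β m * (∑ u, pdl u + ∑ j, qdl j))) := by
        unfold OunX
        rw [hPt']
      have hle : ∀ m ∈ Finset.univ, α m * Real.logb 2
            (1 + (N:ℝ) * pdl m * thetaX β τ pup m / (1 + β m * (∑ u, pdl u + ∑ j, qdl j)))
          ≤ α m * Real.logb 2
            (1 + (N:ℝ) * pdl' m * thetaX β τ pup m
              / (1 + β m * (∑ u, pdl u + ∑ j, qdl j))) := by
        intro m _
        have hple : pdl m ≤ pdl' m := by simp only [hpdl'_def]; linarith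
        have hnum : (N:ℝ) * pdl m * thetaX β τ pup m ≤ (N:ℝ) * pdl' m * thetaX β τ pup m :=
          mul_le_mul_of_nonneg_right (mul_le_mul_of_nonneg_left hple hNR.le) (hθ0 m)
        have hdivle := (div_le_div_iff_of_pos_right (hd0 m)).mpr hnum
        exact mul_le_mul_of_nonneg_left (Real.logb_le_logb_of_le one_lt_two
          (by linarith [hz0 m]) (by linarith)) (hα m).le
      have hθm0 : 0 < thetaX β τ pup m0 := thetaX_pos hβ (fun m => (hpup0 m).1) hτpos m0 hm0'
      have hlt : α m0 * Real.logb 2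
            (1 + (N:ℝ) * pdl m0 * thetaX β τ pup m0
              / (1 + β m0 * (∑ u, pdl u + ∑ j, qdl j)))
          < α m0 * Real.logb 2
            (1 + (N:ℝ) * pdl' m0 * thetaX β τ pup m0
              / (1 + β m0 * (∑ u, pdl u + ∑ j, qdl j))) := by
        have hplt : pdl m0 < pdl' m0 := by simp only [hpdl'_def]; linarith
        have hnum : (N:ℝ) * pdl m0 * thetaX β τ pup m0
            < (N:ℝ) * pdl' m0 * thetaX β τ pup m0 :=
          mul_lt_mul_of_pos_right (mul_lt_mul_of_pos_left hplt hNR) hθm0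
        have hdivlt := (div_lt_div_iff_of_pos_right (hd0 m0)).mpr hnum
        exact mul_lt_mul_of_pos_left (Real.logb_lt_logb one_lt_two
          (by linarith [hz0 m0]) (by linarith)) (hα m0)
      have hsumlt := Finset.sum_lt_sum hle ⟨m0, Finset.mem_univ m0, hlt⟩
      rw [hOun'_eq]
      rw [hOun_eq] at hb
      exact lt_of_le_of_lt hb (mul_lt_mul_of_pos_left hsumlt hf_pos)
    · push_neg at hex
      have hpup_eq : ∀ m, pup m = 0 := fun m => le_antisymm (hex m) (hpup0 m).1
      refine ⟨fun m => Eun m / (τ:ℝ), fun m =>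
        ⟨(div_pos (hEun m) hτR).le, le_of_eq (by field_simp)⟩, ?_⟩
      have hb0' : b ≤ 0 := by
        have hOun0 : OunX N T β α τ pup pdl qdl = 0 := by
          rw [hOun_eq]
          have hz : (∑ m, α m * Real.logb 2
              (1 + (N:ℝ) * pdl m * thetaX β τ pup m
                / (1 + β m * (∑ u, pdl u + ∑ j, qdl j)))) = 0 :=
            Finset.sum_eq_zero fun m _ => by rw [thetaX_zero m (hpup_eq m)]; simp
          rw [hz, mul_zero]
        rwa [hOun0] at hb
      have hθ' : ∀ m, 0 < thetaX β τ (fun m => Eun m / (τ:ℝ)) m := fun m =>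
        thetaX_pos hβ (fun m => (div_pos (hEun m) hτR).le) hτpos m (div_pos (hEun m) hτR)
      have hOun'_eq : OunX N T β α τ (fun m => Eun m / (τ:ℝ)) pdl' qdl' =
          (1 - (τ:ℝ)/(T:ℝ)) * ∑ m, α m * Real.logb 2
            (1 + (N:ℝ) * pdl' m * thetaX β τ (fun m => Eun m / (τ:ℝ)) m
              / (1 + β m * (∑ u, pdl u + ∑ j, qdl j))) := by
        unfold OunX
        rw [hPt']
      have hpos : 0 < ∑ m, α m * Real.logb 2
          (1 + (N:ℝ) * pdl' m * thetaX β τ (fun m => Eun m / (τ:ℝ)) m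
            / (1 + β m * (∑ u, pdl u + ∑ j, qdl j))) := by
        refine Finset.sum_pos (fun m _ => mul_pos (hα m) ?_) Finset.univ_nonempty
        have hzpos : 0 < (N:ℝ) * pdl' m * thetaX β τ (fun m => Eun m / (τ:ℝ)) m
            / (1 + β m * (∑ u, pdl u + ∑ j, qdl j)) :=
          div_pos (mul_pos (mul_pos hNR (hpdl'pos m)) (hθ' m)) (hd0 m)
        exact Real.logb_pos one_lt_two (by linarith)
      rw [hOun'_eq]
      have := mul_pos hf_pos hpos
      linarith
  refine ⟨(OmuX N T η τ qup qdl' pdl', OunX N T β α τ pup' pdl' qdl'),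
    ⟨τ, qup, qdl', pup', pdl',
      ⟨hτ1, hτ2, hqdl'0, fun m => (hpdl'pos m).le, hqup0, hpup', ?_⟩, rfl⟩,
    hOmuPert, hOunPert⟩
  rw [hPt']
  exact hpow

lemma attain_nonneg {U G : ℕ} (hU : 1 ≤ U) (hG : 1 ≤ G) {K : Fin G → ℕ} (hK : ∀ j, 1 ≤ K j)
    {N : ℕ} {T : ℕ} {P : ℝ}
    {η Emu : ∀ j : Fin G, Fin (K j) → ℝ} {β Eun α : Fin U → ℝ}
    (hη : ∀ j k, 0 < η j k) (hβ : ∀ m, 0 < β m) (hα : ∀ m, 0 < α m)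
    {y : ℝ × ℝ} (hy : y ∈ attainS N T P η Emu β Eun α) : 0 ≤ y.1 ∧ 0 ≤ y.2 := by
  obtain ⟨τ, qup, qdl, pup, pdl, ⟨hτ1, hτ2, hqdl0, hpdl0, hqup0, hpup0, hpow⟩, hy_eq⟩ := hy
  subst hy_eq
  have hT0 : (0:ℝ) < (T:ℝ) := by
    have : 0 < T := by omega
    exact_mod_cast this
  have hfle : (τ:ℝ)/(T:ℝ) ≤ 1 := (div_le_one hT0).mpr (by exact_mod_cast hτ2)
  have hf0 : 0 ≤ 1 - (τ:ℝ)/(T:ℝ) := by linarith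
  have hNR : (0:ℝ) ≤ (N:ℝ) := Nat.cast_nonneg N
  have hPt0 : 0 ≤ ∑ m, pdl m + ∑ j, qdl j :=
    add_nonneg (Finset.sum_nonneg fun m _ => hpdl0 m) (Finset.sum_nonneg fun j _ => hqdl0 j)
  constructor
  · show 0 ≤ OmuX N T η τ qup qdl pdl
    have hξ0 : ∀ j k, 0 ≤ xiX η τ qup j k := xiX_nonneg hη fun j k => (hqup0 j k).1
    have hm0 : 0 ≤ ⨅ j, ⨅ k,
        (N:ℝ) * qdl j * xiX η τ qup j k / (1 + η j k * (∑ m, pdl m + ∑ i, qdl i)) :=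
      le_inf2 hG hK fun j k => div_nonneg (mul_nonneg (mul_nonneg hNR (hqdl0 j)) (hξ0 j k))
        (by have := mul_nonneg (hη j k).le hPt0; linarith)
    exact mul_nonneg hf0 (Real.logb_nonneg one_lt_two (by linarith))
  · show 0 ≤ OunX N T β α τ pup pdl qdl
    have hθ0 : ∀ m, 0 ≤ thetaX β τ pup m := thetaX_nonneg hβ fun m => (hpup0 m).1
    refine mul_nonneg hf0 (Finset.sum_nonneg fun m _ => mul_nonneg (hα m).le
      (Real.logb_nonneg one_lt_two ?_))
    have hz : 0 ≤ (N:ℝ) * pdl m * thetaX β τ pup m / (1 + β m * (∑ u, pdl u + ∑ j, qdl j)) :=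
      div_nonneg (mul_nonneg (mul_nonneg hNR (hpdl0 m)) (hθ0 m))
        (by have := mul_nonneg (hβ m).le hPt0; linarith)
    linarith

/-- if `U+G < T`, every weak Pareto optimal point of the attainable
set `S` is also a strong Pareto optimal point, i.e., the weak and strong Pareto
boundaries coincide. -/
theorem moop_weak_pareto_is_strong
    (U G : ℕ) (hU : 1 ≤ U) (hG : 1 ≤ G) (K : Fin G → ℕ) (hK : ∀ j, 1 ≤ K j)
    (N : ℕ) (hN : 1 ≤ N) (T : ℕ) (hT : U + G < T)
    (P : ℝ) (hP : 0 < P)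
    (η Emu : ∀ j : Fin G, Fin (K j) → ℝ) (β Eun α : Fin U → ℝ)
    (hη : ∀ j k, 0 < η j k) (hEmu : ∀ j k, 0 < Emu j k)
    (hβ : ∀ m, 0 < β m) (hEun : ∀ m, 0 < Eun m) (hα : ∀ m, 0 < α m)
    (p : ℝ × ℝ) (hpS : p ∈ attainS N T P η Emu β Eun α)
    (hweak : ¬ ∃ q ∈ attainS N T P η Emu β Eun α, p.1 < q.1 ∧ p.2 < q.2) :
    ¬ ∃ q ∈ attainS N T P η Emu β Eun α,
        (p.1 ≤ q.1 ∧ p.2 < q.2) ∨ (p.1 < q.1 ∧ p.2 ≤ q.2) := by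
  rintro ⟨q, hqS, hdom⟩
  have hp := attain_nonneg hU hG hK hη hβ hα hpS
  obtain ⟨τ, qup, qdl, pup, pdl, hfeas, hq_eq⟩ := hqS
  subst hq_eq
  rcases hdom with ⟨h1, h2⟩ | ⟨h1, h2⟩
  · obtain ⟨y, hyS, hy1, hy2⟩ := caseA hU hG hK hN hη hEmu hβ hEun hα hfeas hp.2 h1 h2
    exact hweak ⟨y, hyS, hy1, hy2⟩
  · obtain ⟨y, hyS, hy1, hy2⟩ := caseB hU hG hK hN hη hEmu hβ hEun hα hfeas hp.1 h1 h2
    exact hweak ⟨y, hyS, hy1, hy2⟩
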